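/- For any graph G, twice the fractional matching number of G is an integer. -/

import Mathlib

open SimpleGraph Finset

/-- The signless Laplacian matrix `Q(G) = D(G) + A(G)` of a graph. -/
noncomputable def signlessLap {V : Type*} [Fintype V] [DecidableEq V]
    (G : SimpleGraph V) [DecidableRel G.Adj] : Matrix V V ℝ :=
  Matrix.diagonal (fun v => (G.degree v : ℝ)) + G.adjMatrix ℝ

/-- The signless Laplacian spectral radius: the largest eigenvalue of `Q(G)`. -/
noncomputable def q1 {V : Type*} [Fintype V] [DecidableEq V]
    (G : SimpleGraph V) [DecidableRel G.Adj] : ℝ :=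
  sSup (spectrum ℝ (signlessLap G))

/-- `f` is a fractional matching of `G`: it assigns each edge a weight in `[0,1]`
(and `0` to non-edges), with total weight at most `1` at each vertex. -/
def IsFracMatching {V : Type*} [Fintype V] [DecidableEq V]
    (G : SimpleGraph V) [DecidableRel G.Adj] (f : Sym2 V → ℝ) : Prop :=
  (∀ e ∈ G.edgeFinset, 0 ≤ f e ∧ f e ≤ 1) ∧
  (∀ e, e ∉ G.edgeFinset → f e = 0) ∧
  (∀ v : V, ∑ e ∈ G.incidenceFinset v, f e ≤ 1)

/-- The fractional matching number of `G`. -/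
noncomputable def fracMatchNum {V : Type*} [Fintype V] [DecidableEq V]
    (G : SimpleGraph V) [DecidableRel G.Adj] : ℝ :=
  sSup {x : ℝ | ∃ f, IsFracMatching G f ∧ x = ∑ e ∈ G.edgeFinset, f e}

/-- `G` has a fractional perfect matching: a fractional matching of total weight `n/2`. -/
def HasFracPerfectMatching {V : Type*} [Fintype V] [DecidableEq V]
    (G : SimpleGraph V) [DecidableRel G.Adj] : Prop :=
  ∃ f, IsFracMatching G f ∧ ∑ e ∈ G.edgeFinset, f e = (Fintype.card V : ℝ) / 2

def IsIntR (x : ℝ) : Prop := ∃ z : ℤ, x = (z : ℝ)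

lemma IsIntR.add {x y : ℝ} (hx : IsIntR x) (hy : IsIntR y) : IsIntR (x + y) := by
  obtain ⟨a, rfl⟩ := hx; obtain ⟨b, rfl⟩ := hy; exact ⟨a + b, by push_cast; ring⟩
lemma IsIntR.sub {x y : ℝ} (hx : IsIntR x) (hy : IsIntR y) : IsIntR (x - y) := by
  obtain ⟨a, rfl⟩ := hx; obtain ⟨b, rfl⟩ := hy; exact ⟨a - b, by push_cast; ring⟩
lemma IsIntR.mul {x y : ℝ} (hx : IsIntR x) (hy : IsIntR y) : IsIntR (x * y) := by
  obtain ⟨a, rfl⟩ := hx; obtain ⟨b, rfl⟩ := hy; exact ⟨a * b, by push_cast; ring⟩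
lemma isIntR_zero : IsIntR 0 := ⟨0, by norm_num⟩
lemma isIntR_one : IsIntR 1 := ⟨1, by norm_num⟩
lemma isIntR_two : IsIntR 2 := ⟨2, by norm_num⟩


lemma isIntR_sum {ι : Type*} (s : Finset ι) (g : ι → ℝ) (h : ∀ i ∈ s, IsIntR (g i)) :
    IsIntR (∑ i ∈ s, g i) := by
  classical
  induction s using Finset.induction_on with
  | empty => simpa using isIntR_zero
  | @insert a s' hx ih =>
    rw [Finset.sum_insert hx]
    exact (h a (Finset.mem_insert_self a s')).add (ih fun i hi => h i (Finset.mem_insert_of_mem hi))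

lemma halfint {E W : Type*} [Fintype E] [Fintype W] [DecidableEq E] [DecidableEq W]
    (M : W → E → ℝ) (hM : ∀ v e, M v e = 0 ∨ M v e = 1)
    (hcol : ∀ e, (Finset.univ.filter fun v => M v e = 1).card ≤ 2) :
    ∀ s : Finset E,
      (∀ d : E → ℝ, (∀ e, e ∉ s → d e = 0) →
        (∀ v, ∑ e ∈ s, M v e * d e = 0) → ∀ e, d e = 0) →
      ∀ x : E → ℝ, (∀ v, IsIntR (∑ e ∈ s, M v e * x e)) →
      ∀ e ∈ s, IsIntR (2 * x e) := by
  classical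
  intro s
  induction s using Finset.strongInductionOn with
  | _ s ih =>
  intro hinj x hx
  have rowsum : ∀ (v : W) (y : E → ℝ),
      ∑ e ∈ s, M v e * y e = ∑ e ∈ s.filter (fun e => M v e = 1), y e := by
    intro v y
    rw [Finset.sum_filter]
    refine Finset.sum_congr rfl fun e _ => ?_
    rcases hM v e with h | h <;> simp [h]
  by_cases hA : ∃ v, (s.filter fun e => M v e = 1).card = 1
  · -- leaf elimination
    obtain ⟨v, hv⟩ := hA
    obtain ⟨e₀, he₀⟩ := Finset.card_eq_one.mp hv
    have he₀s : e₀ ∈ s := by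
      have : e₀ ∈ s.filter fun e => M v e = 1 := by rw [he₀]; exact mem_singleton_self _
      exact (mem_filter.mp this).1
    have hMve₀ : M v e₀ = 1 := by
      have : e₀ ∈ s.filter fun e => M v e = 1 := by rw [he₀]; exact mem_singleton_self _
      exact (mem_filter.mp this).2
    have hint0 : IsIntR (x e₀) := by
      have := hx v
      rwa [rowsum v x, he₀, Finset.sum_singleton] at this
    have hsplit : ∀ (y : E → ℝ) (w : W),
        ∑ e ∈ s.erase e₀, M w e * y e + M w e₀ * y e₀ = ∑ e ∈ s, M w e * y e :=
      fun y w => Finset.sum_erase_add s _ he₀s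
    have hrec := ih (s.erase e₀) (Finset.erase_ssubset he₀s)
      (by
        intro d hd0 hrow
        refine hinj d (fun e hes => hd0 e fun hes' => hes (Finset.mem_of_mem_erase hes')) ?_
        intro w
        rw [← hsplit d w, hrow w, hd0 e₀ (Finset.notMem_erase e₀ s), mul_zero, add_zero])
      x
      (by
        intro w
        have : ∑ e ∈ s.erase e₀, M w e * x e
            = (∑ e ∈ s, M w e * x e) - M w e₀ * x e₀ := by
          rw [← hsplit x w]; ring
        rw [this]
        refine (hx w).sub (IsIntR.mul ?_ hint0)
        rcases hM w e₀ with h | h <;> [exact h ▸ isIntR_zero; exact h ▸ isIntR_one])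
    intro e hes
    by_cases he : e = e₀
    · subst he; exact isIntR_two.mul hint0
    · exact hrec e (Finset.mem_erase.mpr ⟨he, hes⟩)
  · -- regular case: every row meets s in 0 or ≥ 2 columns; counting forces exactly 2
    push_neg at hA
    set W₀ : Finset W := Finset.univ.filter fun v => 0 < (s.filter fun e => M v e = 1).card with hW₀
    -- (b1) card s ≤ card W₀ by linear independence
    have hli : LinearIndependent ℝ (fun (e : ↥s) => fun (v : ↥W₀) => M v e) := by
      rw [Fintype.linearIndependent_iff]
      intro c hc i
      set d : E → ℝ := fun e => if h : e ∈ s then c ⟨e, h⟩ else 0 with hd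
      have hrow : ∀ v : W, ∑ e ∈ s, M v e * d e = 0 := by
        intro v
        have hsum : ∑ e ∈ s, M v e * d e = ∑ i : ↥s, M v i * c i := by
          rw [← Finset.sum_attach s (fun e => M v e * d e)]
          refine Finset.sum_congr rfl fun i _ => ?_
          simp [hd, i.2]
        by_cases hv : v ∈ W₀
        · have := congrFun hc ⟨v, hv⟩
          simp only [Finset.sum_apply, Pi.smul_apply, smul_eq_mul, Pi.zero_apply] at this
          rw [hsum]
          rw [← this]
          exact Finset.sum_congr rfl fun i _ => mul_comm _ _
        · have hzero : ∀ e ∈ s, M v e = 0 := by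
            intro e hes
            rcases hM v e with h | h
            · exact h
            · exfalso
              apply hv
              simp only [hW₀, mem_filter, Finset.mem_univ, true_and, Finset.card_pos]
              exact ⟨e, mem_filter.mpr ⟨hes, h⟩⟩
          rw [Finset.sum_congr rfl fun e hes => by rw [hzero e hes, zero_mul]]
          simp
      have := hinj d (fun e hes => by simp [hd, hes]) hrow
      have := this i
      simpa [hd, i.2] using this
    have hcards : s.card ≤ W₀.card := by
      have h1 := hli.fintype_card_le_finrank
      rwa [Module.finrank_pi, Fintype.card_coe, Fintype.card_coe] at h1
    -- (b2) counting: rows in W₀ have exactly 2 ones in s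
    have hge2 : ∀ v ∈ W₀, 2 ≤ (s.filter fun e => M v e = 1).card := by
      intro v hv
      have h1 : 0 < (s.filter fun e => M v e = 1).card := (mem_filter.mp hv).2
      have h2 := hA v
      omega
    have hdouble : ∑ v : W, (s.filter fun e => M v e = 1).card
        = ∑ e ∈ s, (Finset.univ.filter fun v => M v e = 1).card := by
      simp only [Finset.card_filter]
      exact Finset.sum_comm
    have hsub : ∑ v ∈ W₀, (s.filter fun e => M v e = 1).card
        = ∑ v : W, (s.filter fun e => M v e = 1).card := by
      refine Finset.sum_subset (Finset.subset_univ _) ?_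
      intro v _ hv
      have : ¬ 0 < (s.filter fun e => M v e = 1).card := by
        intro h
        exact hv (by simp only [hW₀, mem_filter, Finset.mem_univ, true_and]; exact h)
      omega
    have hub : ∑ v ∈ W₀, (s.filter fun e => M v e = 1).card ≤ 2 * W₀.card := by
      rw [hsub, hdouble]
      calc ∑ e ∈ s, (Finset.univ.filter fun v => M v e = 1).card
          ≤ ∑ _e ∈ s, 2 := Finset.sum_le_sum fun e _ => hcol e
        _ = 2 * s.card := by rw [Finset.sum_const, smul_eq_mul, mul_comm]
        _ ≤ 2 * W₀.card := by omega
    have hrow2 : ∀ v ∈ W₀, (s.filter fun e => M v e = 1).card = 2 := by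
      by_contra hcon
      push_neg at hcon
      obtain ⟨v₁, hv₁, hne⟩ := hcon
      have hlt : ∑ _v ∈ W₀, 2 < ∑ v ∈ W₀, (s.filter fun e => M v e = 1).card := by
        refine Finset.sum_lt_sum (fun v hv => hge2 v hv) ⟨v₁, hv₁, ?_⟩
        exact lt_of_le_of_ne (hge2 v₁ hv₁) (Ne.symm hne)
      rw [Finset.sum_const, smul_eq_mul, mul_comm] at hlt
      omega
    have hrow02 : ∀ v : W, (s.filter fun e => M v e = 1).card = 0
        ∨ (s.filter fun e => M v e = 1).card = 2 := by
      intro v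
      by_cases hv : v ∈ W₀
      · exact Or.inr (hrow2 v hv)
      · left
        have : ¬ 0 < (s.filter fun e => M v e = 1).card := by
          intro h
          exact hv (by simp only [hW₀, mem_filter, Finset.mem_univ, true_and]; exact h)
        omega
    -- the alternating-sign kernel vector trick
    intro e₀ he₀
    by_contra h2t
    have no2 : ∀ a : ℝ, IsIntR (a - x e₀) → IsIntR (a + x e₀) → False := by
      intro a h1 h2
      apply h2t
      have h3 := h2.sub h1
      have heq : a + x e₀ - (a - x e₀) = 2 * x e₀ := by ring
      rwa [heq] at h3
    set d : E → ℝ := fun e => if e ∈ s then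
        (if IsIntR (x e - x e₀) then 1 else if IsIntR (x e + x e₀) then (-1:ℝ) else 0)
      else 0 with hd
    have hrowd : ∀ v : W, ∑ e ∈ s, M v e * d e = 0 := by
      intro v
      rw [rowsum v d]
      rcases hrow02 v with h0 | h2
      · rw [Finset.card_eq_zero.mp h0, Finset.sum_empty]
      · obtain ⟨e₁, e₂, hne12, hpair⟩ := Finset.card_eq_two.mp h2
        have he₁ : e₁ ∈ s := by
          have : e₁ ∈ s.filter fun e => M v e = 1 := by
            rw [hpair]; exact mem_insert_self _ _
          exact (mem_filter.mp this).1
        have he₂ : e₂ ∈ s := by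
          have : e₂ ∈ s.filter fun e => M v e = 1 := by
            rw [hpair]; exact mem_insert_of_mem (mem_singleton_self _)
          exact (mem_filter.mp this).1
        have hxint : IsIntR (x e₁ + x e₂) := by
          have h := hx v
          rwa [rowsum v x, hpair, Finset.sum_pair hne12] at h
        rw [hpair, Finset.sum_pair hne12]
        simp only [hd, if_pos he₁, if_pos he₂]
        by_cases hA1 : IsIntR (x e₁ - x e₀)
        · have hB2 : IsIntR (x e₂ + x e₀) := by
            have h := hxint.sub hA1
            have heq : x e₁ + x e₂ - (x e₁ - x e₀) = x e₂ + x e₀ := by ring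
            rwa [heq] at h
          have hA2 : ¬ IsIntR (x e₂ - x e₀) := fun h => no2 _ h hB2
          rw [if_pos hA1, if_neg hA2, if_pos hB2]; ring
        · by_cases hB1 : IsIntR (x e₁ + x e₀)
          · have hA2 : IsIntR (x e₂ - x e₀) := by
              have h := hxint.sub hB1
              have heq : x e₁ + x e₂ - (x e₁ + x e₀) = x e₂ - x e₀ := by ring
              rwa [heq] at h
            rw [if_neg hA1, if_pos hB1, if_pos hA2]; ring
          · have hA2 : ¬ IsIntR (x e₂ - x e₀) := by
              intro h
              apply hB1
              have h3 := hxint.sub h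
              have heq : x e₁ + x e₂ - (x e₂ - x e₀) = x e₁ + x e₀ := by ring
              rwa [heq] at h3
            have hB2 : ¬ IsIntR (x e₂ + x e₀) := by
              intro h
              apply hA1
              have h3 := hxint.sub h
              have heq : x e₁ + x e₂ - (x e₂ + x e₀) = x e₁ - x e₀ := by ring
              rwa [heq] at h3
            rw [if_neg hA1, if_neg hB1, if_neg hA2, if_neg hB2]; ring
    have hde₀ := hinj d (fun e hes => by simp [hd, hes]) hrowd e₀
    have h00 : IsIntR (x e₀ - x e₀) := by rw [sub_self]; exact isIntR_zero
    rw [hd] at hde₀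
    simp only [if_pos he₀, if_pos h00] at hde₀
    exact one_ne_zero hde₀


section Defs
variable {V : Type*} [Fintype V] [DecidableEq V] (G : SimpleGraph V) [DecidableRel G.Adj]

noncomputable def bad (f : Sym2 V → ℝ) : Finset (Sym2 V) :=
  @Finset.filter _ (fun e => ¬ IsIntR (f e)) (Classical.decPred _) G.edgeFinset

noncomputable def slack (f : Sym2 V → ℝ) : Finset V :=
  @Finset.filter _ (fun v => ∑ e ∈ G.incidenceFinset v, f e < 1) (Classical.decPred _)
    Finset.univ

noncomputable def mea (f : Sym2 V → ℝ) : ℕ :=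
  (Fintype.card V + 1) * (bad G f).card + (slack G f).card

lemma mem_bad {f : Sym2 V → ℝ} {e : Sym2 V} :
    e ∈ bad G f ↔ e ∈ G.edgeFinset ∧ ¬ IsIntR (f e) :=
  @Finset.mem_filter _ _ (Classical.decPred _) _ _

lemma mem_slack {f : Sym2 V → ℝ} {v : V} :
    v ∈ slack G f ↔ ∑ e ∈ G.incidenceFinset v, f e < 1 := by
  unfold slack; rw [Finset.mem_filter]; simp

lemma bad_open {f : Sym2 V → ℝ} (hf : IsFracMatching G f) {e : Sym2 V}
    (he : e ∈ bad G f) : 0 < f e ∧ f e < 1 := by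
  obtain ⟨he1, he2⟩ := mem_bad G |>.mp he
  obtain ⟨h0, h1⟩ := hf.1 e he1
  constructor
  · rcases lt_or_eq_of_le h0 with h | h
    · exact h
    · exact absurd (h ▸ isIntR_zero) he2
  · rcases lt_or_eq_of_le h1 with h | h
    · exact h
    · exact absurd (h ▸ isIntR_one) he2

lemma bad_subset (f : Sym2 V → ℝ) : bad G f ⊆ G.edgeFinset :=
  @Finset.filter_subset _ _ (Classical.decPred _) _

/-- Feasible-move lemma: given a direction `d` supported on the fractional (bad) edges
whose incidence sums vanish at tight vertices, there is a positive step `ε` keeping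
feasibility, and if `d` has a negative coordinate on a bad edge, the step makes
some bad edge hit `{0,1}` or some slack vertex become tight. -/
lemma move {f d : Sym2 V → ℝ} (hf : IsFracMatching G f)
    (hd0 : ∀ e, e ∉ bad G f → d e = 0)
    (hrow : ∀ v, ∑ e ∈ G.incidenceFinset v, f e = 1 →
      ∑ e ∈ G.incidenceFinset v, d e = 0) :
    ∃ ε : ℝ, 0 < ε ∧ IsFracMatching G (fun e => f e + ε * d e) ∧
      ((∃ e ∈ bad G f, d e < 0) →
        ((∃ e ∈ bad G f, f e + ε * d e = 0 ∨ f e + ε * d e = 1) ∨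
         (∃ v, v ∈ slack G f ∧ ∑ e ∈ G.incidenceFinset v, (f e + ε * d e) = 1))) := by
  classical
  set t : V → ℝ := fun v => ∑ e ∈ G.incidenceFinset v, f e with ht
  set sd : V → ℝ := fun v => ∑ e ∈ G.incidenceFinset v, d e with hsd
  set C : Finset ℝ :=
      ((bad G f).filter (fun e => d e < 0)).image (fun e => f e / (-d e)) ∪
      ((bad G f).filter (fun e => 0 < d e)).image (fun e => (1 - f e) / d e) ∪
      (Finset.univ.filter (fun v => t v < 1 ∧ 0 < sd v)).image
        (fun v => (1 - t v) / sd v) with hC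
  have hCpos : ∀ r ∈ C, 0 < r := by
    intro r hr
    rw [hC] at hr
    rcases Finset.mem_union.mp hr with hr | hr
    · rcases Finset.mem_union.mp hr with hr | hr
      · obtain ⟨e, he, rfl⟩ := Finset.mem_image.mp hr
        obtain ⟨heb, hed⟩ := Finset.mem_filter.mp he
        exact div_pos (bad_open G hf heb).1 (by linarith)
      · obtain ⟨e, he, rfl⟩ := Finset.mem_image.mp hr
        obtain ⟨heb, hed⟩ := Finset.mem_filter.mp he
        exact div_pos (by linarith [(bad_open G hf heb).2]) hed
    · obtain ⟨v, hv, rfl⟩ := Finset.mem_image.mp hr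
      obtain ⟨-, hv1, hv2⟩ := Finset.mem_filter.mp hv
      exact div_pos (by linarith) hv2
  set ε : ℝ := if hne : C.Nonempty then C.min' hne else 1 with hε
  have hεpos : 0 < ε := by
    rw [hε]
    split
    · next hne => exact hCpos _ (C.min'_mem hne)
    · norm_num
  have hεle : ∀ r ∈ C, ε ≤ r := by
    intro r hr
    rw [hε, dif_pos ⟨r, hr⟩]
    exact Finset.min'_le _ _ hr
  refine ⟨ε, hεpos, ?_, ?_⟩
  · -- feasibility
    refine ⟨?_, ?_, ?_⟩
    · intro e he
      dsimp only
      by_cases heb : e ∈ bad G f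
      · obtain ⟨h0, h1⟩ := bad_open G hf heb
        constructor
        · rcases le_or_gt 0 (d e) with hd | hd
          · positivity
          · have hmem : f e / (-d e) ∈ C := by
              rw [hC]
              refine Finset.mem_union.mpr (Or.inl (Finset.mem_union.mpr (Or.inl ?_)))
              exact Finset.mem_image.mpr ⟨e, Finset.mem_filter.mpr ⟨heb, hd⟩, rfl⟩
            have h2 := hεle _ hmem
            have hnd : 0 < -d e := by linarith
            rw [le_div_iff₀ hnd] at h2
            nlinarith
        · rcases le_or_gt (d e) 0 with hd | hd
          · nlinarith
          · have hmem : (1 - f e) / d e ∈ C := by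
              rw [hC]
              refine Finset.mem_union.mpr (Or.inl (Finset.mem_union.mpr (Or.inr ?_)))
              exact Finset.mem_image.mpr ⟨e, Finset.mem_filter.mpr ⟨heb, hd⟩, rfl⟩
            have h2 := hεle _ hmem
            rw [le_div_iff₀ hd] at h2
            nlinarith
      · rw [hd0 e heb, mul_zero, add_zero]
        exact hf.1 e he
    · intro e he
      dsimp only
      rw [hf.2.1 e he, hd0 e (fun hb => he (bad_subset G f hb)), mul_zero, add_zero]
    · intro v
      dsimp only
      have hsplit : ∑ e ∈ G.incidenceFinset v, (f e + ε * d e) = t v + ε * sd v := by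
        rw [ht, hsd, Finset.sum_add_distrib, Finset.mul_sum]
      rw [hsplit]
      rcases eq_or_lt_of_le (hf.2.2 v) with h1 | h1
      · have h2 : sd v = 0 := hrow v h1
        have h3 : t v = 1 := h1
        rw [h2, h3]
        norm_num
      · rcases le_or_gt (sd v) 0 with h2 | h2
        · nlinarith
        · have hmem : (1 - t v) / sd v ∈ C := by
            rw [hC]
            refine Finset.mem_union.mpr (Or.inr ?_)
            exact Finset.mem_image.mpr
              ⟨v, Finset.mem_filter.mpr ⟨Finset.mem_univ v, h1, h2⟩, rfl⟩
          have h3 := hεle _ hmem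
          rw [le_div_iff₀ h2] at h3
          nlinarith
  · -- binding event
    intro ⟨e₁, he₁, hd₁⟩
    have hCne : C.Nonempty := by
      refine ⟨f e₁ / (-d e₁), ?_⟩
      rw [hC]
      refine Finset.mem_union.mpr (Or.inl (Finset.mem_union.mpr (Or.inl ?_)))
      exact Finset.mem_image.mpr ⟨e₁, Finset.mem_filter.mpr ⟨he₁, hd₁⟩, rfl⟩
    have hεmem : ε ∈ C := by rw [hε, dif_pos hCne]; exact C.min'_mem hCne
    rw [hC] at hεmem
    rcases Finset.mem_union.mp hεmem with hr | hr
    · rcases Finset.mem_union.mp hr with hr | hr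
      · obtain ⟨e, he, heq⟩ := Finset.mem_image.mp hr
        obtain ⟨heb, hed⟩ := Finset.mem_filter.mp he
        refine Or.inl ⟨e, heb, Or.inl ?_⟩
        have hnd : -d e ≠ 0 := by linarith
        rw [← heq]
        field_simp
        rw [div_self (by linarith : d e < 0).ne]; ring
      · obtain ⟨e, he, heq⟩ := Finset.mem_image.mp hr
        obtain ⟨heb, hed⟩ := Finset.mem_filter.mp he
        refine Or.inl ⟨e, heb, Or.inr ?_⟩
        have hnd : d e ≠ 0 := by linarith
        rw [← heq]
        field_simp
        ring
    · obtain ⟨v, hv, heq⟩ := Finset.mem_image.mp hr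
      obtain ⟨-, hv1, hv2⟩ := Finset.mem_filter.mp hv
      refine Or.inr ⟨v, (mem_slack G).mpr hv1, ?_⟩
      have hsplit : ∑ e ∈ G.incidenceFinset v, (f e + ε * d e) = t v + ε * sd v := by
        rw [ht, hsd, Finset.sum_add_distrib, Finset.mul_sum]
      have hnd : sd v ≠ 0 := by linarith
      rw [hsplit, ← heq]
      field_simp
      ring

end Defs

section Main
variable {V : Type*} [Fintype V] [DecidableEq V] (G : SimpleGraph V) [DecidableRel G.Adj]

lemma sum_int_of_bad_empty {f : Sym2 V → ℝ} (hbe : bad G f = ∅) :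
    IsIntR (∑ e ∈ G.edgeFinset, f e) := by
  refine isIntR_sum _ _ ?_
  intro e he
  by_contra hni
  have h : e ∈ bad G f := (mem_bad G).mpr ⟨he, hni⟩
  rw [hbe] at h
  exact absurd h (Finset.notMem_empty e)

lemma maximal_int : ∀ (n : ℕ) (f : Sym2 V → ℝ), IsFracMatching G f →
    (∀ g, IsFracMatching G g → ∑ e ∈ G.edgeFinset, g e ≤ ∑ e ∈ G.edgeFinset, f e) →
    mea G f ≤ n → IsIntR (2 * ∑ e ∈ G.edgeFinset, f e) := by
  classical
  intro n
  induction n with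
  | zero =>
    intro f hf hmax hm
    have hbe : bad G f = ∅ := by
      have h0 := Nat.le_zero.mp hm
      unfold mea at h0
      have h1 : (bad G f).card = 0 := by
        by_contra hc
        have : 1 ≤ (bad G f).card := Nat.one_le_iff_ne_zero.mpr hc
        have h2 : Fintype.card V + 1 ≤ (Fintype.card V + 1) * (bad G f).card :=
          Nat.le_mul_of_pos_right _ (by omega)
        omega
      exact Finset.card_eq_zero.mp h1
    obtain ⟨z, hz⟩ := sum_int_of_bad_empty G hbe
    exact ⟨2 * z, by rw [hz]; push_cast; ring⟩
  | succ n IH =>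
    intro f hf hmax hm
    by_cases hbe : bad G f = ∅
    · obtain ⟨z, hz⟩ := sum_int_of_bad_empty G hbe
      exact ⟨2 * z, by rw [hz]; push_cast; ring⟩
    by_cases hker : ∃ d : Sym2 V → ℝ, (∀ e, e ∉ bad G f → d e = 0) ∧
        (∀ v, ∑ e ∈ G.incidenceFinset v, f e = 1 →
          ∑ e ∈ G.incidenceFinset v, d e = 0) ∧ d ≠ 0
    · obtain ⟨d, hd0, hrow, hdne⟩ := hker
      by_cases hS : ∑ e ∈ bad G f, d e = 0
      · -- zero-sum kernel direction: perturb, decreasing the measure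
        have hneg : ∃ e ∈ bad G f, d e < 0 := by
          by_contra hcon
          push_neg at hcon
          obtain ⟨e₀, he₀⟩ := Function.ne_iff.mp hdne
          have he₀b : e₀ ∈ bad G f := by
            by_contra h; exact he₀ (hd0 e₀ h)
          have hpos : 0 < ∑ e ∈ bad G f, d e :=
            Finset.sum_pos' (fun e he => hcon e he)
              ⟨e₀, he₀b, lt_of_le_of_ne (hcon e₀ he₀b) (Ne.symm he₀)⟩
          exact absurd hS (ne_of_gt hpos)
        obtain ⟨ε, hεp, hfeas, hevent⟩ := move G hf hd0 hrow
        have hev := hevent hneg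
        set f' : Sym2 V → ℝ := fun e => f e + ε * d e with hf'def
        have hsumd : ∑ e ∈ G.edgeFinset, d e = 0 := by
          rw [← Finset.sum_subset (bad_subset G f) (fun e _ hnb => hd0 e hnb)]
          exact hS
        have hsum' : ∑ e ∈ G.edgeFinset, f' e = ∑ e ∈ G.edgeFinset, f e := by
          simp only [hf'def]
          rw [Finset.sum_add_distrib, ← Finset.mul_sum, hsumd, mul_zero, add_zero]
        have hmax' : ∀ g, IsFracMatching G g →
            ∑ e ∈ G.edgeFinset, g e ≤ ∑ e ∈ G.edgeFinset, f' e := by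
          intro g hg; rw [hsum']; exact hmax g hg
        have hbadsub : bad G f' ⊆ bad G f := by
          intro e he
          obtain ⟨hee, hni⟩ := (mem_bad G).mp he
          by_contra hnb
          have heq : f' e = f e := by
            simp only [hf'def]; rw [hd0 e hnb, mul_zero, add_zero]
          apply hni
          rw [heq]
          by_contra hni2
          exact hnb ((mem_bad G).mpr ⟨hee, hni2⟩)
        have htight : ∀ v, ∑ e ∈ G.incidenceFinset v, f e = 1 →
            ∑ e ∈ G.incidenceFinset v, f' e = 1 := by
          intro v hv
          simp only [hf'def]
          rw [Finset.sum_add_distrib, ← Finset.mul_sum, hrow v hv, mul_zero, add_zero, hv]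
        have hslacksub : slack G f' ⊆ slack G f := by
          intro v hv
          rw [mem_slack G] at hv ⊢
          rcases eq_or_lt_of_le (hf.2.2 v) with h1 | h1
          · exact absurd (htight v h1) (ne_of_lt hv)
          · exact h1
        have hcardb : (bad G f').card ≤ (bad G f).card := Finset.card_le_card hbadsub
        have hcards : (slack G f').card ≤ (slack G f).card := Finset.card_le_card hslacksub
        have hKb : (slack G f').card ≤ Fintype.card V := by
          simpa using Finset.card_le_univ (slack G f')
        have hmea : mea G f' < mea G f := by
          rcases hev with ⟨e, heb, hval⟩ | ⟨v, hvs, hveq⟩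
          · have hnotb : e ∉ bad G f' := by
              rw [mem_bad G]
              rintro ⟨-, hni⟩
              rcases hval with h | h
              · refine hni ?_
                have hfe : f' e = 0 := h
                rw [hfe]; exact isIntR_zero
              · refine hni ?_
                have hfe : f' e = 1 := h
                rw [hfe]; exact isIntR_one
            have hsub : bad G f' ⊆ (bad G f).erase e :=
              fun x hx => Finset.mem_erase.mpr ⟨fun hxe => hnotb (hxe ▸ hx), hbadsub hx⟩
            have hlt : (bad G f').card < (bad G f).card := by
              have h1 := Finset.card_le_card hsub
              have h2 : ((bad G f).erase e).card < (bad G f).card :=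
                Finset.card_erase_lt_of_mem heb
              omega
            unfold mea
            calc (Fintype.card V + 1) * (bad G f').card + (slack G f').card
                ≤ (Fintype.card V + 1) * (bad G f').card + Fintype.card V :=
                  Nat.add_le_add_left hKb _
              _ < (Fintype.card V + 1) * ((bad G f').card + 1) := by
                  rw [Nat.mul_add, Nat.mul_one]
                  exact Nat.add_lt_add_left (Nat.lt_succ_self _) _
              _ ≤ (Fintype.card V + 1) * (bad G f).card :=
                  Nat.mul_le_mul_left _ hlt
              _ ≤ (Fintype.card V + 1) * (bad G f).card + (slack G f).card :=
                  Nat.le_add_right _ _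
          · have hveq' : ∑ e ∈ G.incidenceFinset v, f' e = 1 := hveq
            have hv' : v ∉ slack G f' := by
              rw [mem_slack G, hveq']
              norm_num
            have hsub : slack G f' ⊆ (slack G f).erase v :=
              fun x hx => Finset.mem_erase.mpr ⟨fun hxv => hv' (hxv ▸ hx), hslacksub hx⟩
            have hlt : (slack G f').card < (slack G f).card := by
              have h1 := Finset.card_le_card hsub
              have h2 := Finset.card_erase_lt_of_mem hvs
              omega
            unfold mea
            calc (Fintype.card V + 1) * (bad G f').card + (slack G f').card
                ≤ (Fintype.card V + 1) * (bad G f).card + (slack G f').card :=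
                  Nat.add_le_add_right (Nat.mul_le_mul_left _ hcardb) _
              _ < (Fintype.card V + 1) * (bad G f).card + (slack G f).card :=
                  Nat.add_lt_add_left hlt _
        have hIH := IH f' hfeas hmax' (by omega)
        rwa [hsum'] at hIH
      · -- nonzero-sum kernel direction: contradicts maximality
        exfalso
        set d' : Sym2 V → ℝ :=
          fun e => if 0 < ∑ e ∈ bad G f, d e then d e else - d e with hd'
        have hd0' : ∀ e, e ∉ bad G f → d' e = 0 := by
          intro e he; simp only [hd']; rw [hd0 e he]; split <;> norm_num
        have hrow' : ∀ v, ∑ e ∈ G.incidenceFinset v, f e = 1 →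
            ∑ e ∈ G.incidenceFinset v, d' e = 0 := by
          intro v hv
          simp only [hd']
          split
          · exact hrow v hv
          · rw [Finset.sum_neg_distrib, hrow v hv, neg_zero]
        have hS' : 0 < ∑ e ∈ bad G f, d' e := by
          by_cases hpos : 0 < ∑ e ∈ bad G f, d e
          · simp only [hd', if_pos hpos]; exact hpos
          · simp only [hd', if_neg hpos]
            rw [Finset.sum_neg_distrib]
            have hlt : ∑ e ∈ bad G f, d e < 0 :=
              lt_of_le_of_ne (not_lt.mp hpos) hS
            linarith
        obtain ⟨ε, hεp, hfeas, -⟩ := move G hf hd0' hrow'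
        have hsub : ∑ e ∈ bad G f, d' e = ∑ e ∈ G.edgeFinset, d' e :=
          Finset.sum_subset (bad_subset G f) (fun e _ hnb => hd0' e hnb)
        have hsum' : ∑ e ∈ G.edgeFinset, (f e + ε * d' e)
            = ∑ e ∈ G.edgeFinset, f e + ε * ∑ e ∈ bad G f, d' e := by
          rw [Finset.sum_add_distrib, ← Finset.mul_sum, hsub]
        have hle : ∑ e ∈ G.edgeFinset, (f e + ε * d' e) ≤ ∑ e ∈ G.edgeFinset, f e :=
          hmax _ hfeas
        rw [hsum'] at hle
        nlinarith [mul_pos hεp hS']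
    · -- trivial kernel: half-integrality via the matrix lemma
      push_neg at hker
      set B := bad G f with hB
      set Wt : Finset V := Finset.univ.filter
        (fun v => ∑ e ∈ G.incidenceFinset v, f e = 1) with hWt
      set M : ↥Wt → ↥B → ℝ :=
        fun v e => if (v : V) ∈ (e : Sym2 V) then 1 else 0 with hM
      have hM01 : ∀ (v : ↥Wt) (e : ↥B), M v e = 0 ∨ M v e = 1 := by
        intro v e; simp only [hM]; split
        · exact Or.inr rfl
        · exact Or.inl rfl
      have htrans2 : ∀ v : V, B.filter (fun e => v ∈ e)
          = (G.incidenceFinset v).filter (fun e => e ∈ B) := by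
        intro v
        rw [SimpleGraph.incidenceFinset_eq_filter]
        ext e
        simp only [Finset.mem_filter]
        constructor
        · rintro ⟨heB, hev⟩
          exact ⟨⟨bad_subset G f heB, hev⟩, heB⟩
        · rintro ⟨⟨hee, hev⟩, heB⟩
          exact ⟨heB, hev⟩
      have hsubsum : ∀ (v : V) (y : Sym2 V → ℝ),
          ∑ e : ↥B, (if v ∈ (e : Sym2 V) then (1:ℝ) else 0) * y (e : Sym2 V)
            = ∑ e ∈ B.filter (fun e => v ∈ e), y e := by
        intro v y
        rw [Finset.sum_coe_sort B (fun e => (if v ∈ e then (1:ℝ) else 0) * y e),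
          Finset.sum_filter]
        refine Finset.sum_congr rfl fun e _ => ?_
        split <;> simp
      have hcol : ∀ e : ↥B,
          (Finset.univ.filter fun v : ↥Wt => M v e = 1).card ≤ 2 := by
        intro e
        obtain ⟨a, b, hab⟩ : ∃ a b : V, (e : Sym2 V) = s(a, b) :=
          Sym2.inductionOn (e : Sym2 V) (fun x y => ⟨x, y, rfl⟩)
        have hsub : (Finset.univ.filter fun v : ↥Wt => M v e = 1).card
            ≤ ({a, b} : Finset V).card := by
          refine Finset.card_le_card_of_injOn (fun v => (v : V)) ?_
            (Subtype.val_injective.injOn)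
          intro v hv
          have h1 := (Finset.mem_filter.mp hv).2
          have hmem : (v : V) ∈ (e : Sym2 V) := by
            by_contra hc
            simp only [hM, if_neg hc] at h1
            norm_num at h1
          rw [hab, Sym2.mem_iff] at hmem
          rcases hmem with h | h <;> simp [h]
        have h2 : ({a, b} : Finset V).card ≤ 2 :=
          (Finset.card_insert_le _ _).trans (by simp)
        omega
      have hinj : ∀ dd : ↥B → ℝ, (∀ e, e ∉ (Finset.univ : Finset ↥B) → dd e = 0) →
          (∀ v : ↥Wt, ∑ e ∈ (Finset.univ : Finset ↥B), M v e * dd e = 0) →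
          ∀ e, dd e = 0 := by
        intro dd _ hrows
        set D : Sym2 V → ℝ := fun e => if h : e ∈ B then dd ⟨e, h⟩ else 0 with hD
        have hDconv : ∀ e : ↥B, D (e : Sym2 V) = dd e := by
          intro e; simp only [hD]; rw [dif_pos e.2]
        have hD0 : ∀ e, e ∉ bad G f → D e = 0 := by
          intro e he; simp only [hD]; rw [dif_neg he]
        have hDrow : ∀ v, ∑ e ∈ G.incidenceFinset v, f e = 1 →
            ∑ e ∈ G.incidenceFinset v, D e = 0 := by
          intro v hv
          have hvWt : v ∈ Wt :=
            Finset.mem_filter.mpr ⟨Finset.mem_univ v, hv⟩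
          have h1 := hrows ⟨v, hvWt⟩
          have h2 : ∑ e ∈ (Finset.univ : Finset ↥B), M ⟨v, hvWt⟩ e * dd e
              = ∑ e ∈ B.filter (fun e => v ∈ e), D e := by
            rw [← hsubsum v D]
            refine Finset.sum_congr rfl fun e _ => ?_
            simp only [hM]
            rw [hDconv e]
          have hsplit := Finset.sum_filter_add_sum_filter_not (G.incidenceFinset v)
            (fun e => e ∈ B) D
          have hz : ∑ e ∈ (G.incidenceFinset v).filter (fun e => ¬ e ∈ B), D e = 0 :=
            Finset.sum_eq_zero (fun e he => hD0 e (Finset.mem_filter.mp he).2)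
          rw [← hsplit, hz, add_zero, ← htrans2 v, ← h2]
          exact h1
        have hDz : D = 0 := hker D hD0 hDrow
        intro e
        rw [← hDconv e, hDz]
        rfl
      have hx : ∀ v : ↥Wt,
          IsIntR (∑ e ∈ (Finset.univ : Finset ↥B), M v e * f (e : Sym2 V)) := by
        intro v
        have hv : ∑ e ∈ G.incidenceFinset (v : V), f e = 1 :=
          (Finset.mem_filter.mp v.2).2
        have h2 : ∑ e ∈ (Finset.univ : Finset ↥B), M v e * f (e : Sym2 V)
            = ∑ e ∈ B.filter (fun e => (v : V) ∈ e), f e := by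
          rw [← hsubsum (v : V) f]
        have hsplit := Finset.sum_filter_add_sum_filter_not
          (G.incidenceFinset (v : V)) (fun e => e ∈ B) f
        have hint : IsIntR
            (∑ e ∈ (G.incidenceFinset (v : V)).filter (fun e => ¬ e ∈ B), f e) := by
          refine isIntR_sum _ _ ?_
          intro e he
          obtain ⟨he1, he2⟩ := Finset.mem_filter.mp he
          have hee : e ∈ G.edgeFinset := by
            rw [SimpleGraph.incidenceFinset_eq_filter] at he1
            exact (Finset.mem_filter.mp he1).1
          by_contra hni
          exact he2 ((mem_bad G).mpr ⟨hee, hni⟩)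
        rw [h2, htrans2 (v : V)]
        have heq : ∑ e ∈ (G.incidenceFinset (v : V)).filter (fun e => e ∈ B), f e
            = 1 - ∑ e ∈ (G.incidenceFinset (v : V)).filter (fun e => ¬ e ∈ B), f e := by
          rw [← hv, ← hsplit]; ring
        rw [heq]
        exact isIntR_one.sub hint
      have hhalf := halfint M hM01 hcol Finset.univ hinj
        (fun e => f (e : Sym2 V)) hx
      have hall : ∀ e ∈ G.edgeFinset, IsIntR (2 * f e) := by
        intro e he
        by_cases heB : e ∈ B
        · exact hhalf ⟨e, heB⟩ (Finset.mem_univ _)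
        · have hint : IsIntR (f e) := by
            by_contra hni
            exact heB ((mem_bad G).mpr ⟨he, hni⟩)
          obtain ⟨z, hz⟩ := hint
          exact ⟨2 * z, by rw [hz]; push_cast; ring⟩
      rw [Finset.mul_sum]
      exact isIntR_sum _ _ hall

end Main


/-- For any graph `G`, twice the fractional matching number is an integer. -/
theorem twice_fracMatchNum_integer {V : Type*} [Fintype V] [DecidableEq V]
    (G : SimpleGraph V) [DecidableRel G.Adj] :
    ∃ m : ℕ, 2 * fracMatchNum G = (m : ℝ) := by
  classical
  set S : Set ℝ := {x : ℝ | ∃ f, IsFracMatching G f ∧ x = ∑ e ∈ G.edgeFinset, f e}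
    with hSdef
  have hfm : fracMatchNum G = sSup S := rfl
  have h0 : IsFracMatching G (fun _ => 0) :=
    ⟨fun e _ => by norm_num, fun _ _ => rfl, fun v => by simp⟩
  have hS0 : (0 : ℝ) ∈ S := ⟨fun _ => 0, h0, by simp⟩
  have hbdd : BddAbove S := by
    refine ⟨(G.edgeFinset.card : ℝ), ?_⟩
    rintro x ⟨f, hf, rfl⟩
    calc ∑ e ∈ G.edgeFinset, f e ≤ ∑ _e ∈ G.edgeFinset, (1 : ℝ) :=
          Finset.sum_le_sum (fun e he => (hf.1 e he).2)
      _ = (G.edgeFinset.card : ℝ) := by simp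
  set P : Set (Sym2 V → ℝ) := {f | IsFracMatching G f} with hPdef
  have hclosed : IsClosed P := by
    have hP : P = (⋂ e ∈ G.edgeFinset, {f : Sym2 V → ℝ | 0 ≤ f e ∧ f e ≤ 1}) ∩
        ((⋂ e : Sym2 V, {f : Sym2 V → ℝ | e ∉ G.edgeFinset → f e = 0}) ∩
         (⋂ v : V, {f : Sym2 V → ℝ | ∑ e ∈ G.incidenceFinset v, f e ≤ 1})) := by
      ext f
      simp only [hPdef, Set.mem_setOf_eq, IsFracMatching, Set.mem_inter_iff,
        Set.mem_iInter, Set.mem_setOf_eq]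
    rw [hP]
    refine IsClosed.inter ?_ (IsClosed.inter ?_ ?_)
    · refine isClosed_biInter (fun e _ => ?_)
      exact (isClosed_le continuous_const (continuous_apply e)).inter
        (isClosed_le (continuous_apply e) continuous_const)
    · refine isClosed_iInter (fun e => ?_)
      by_cases he : e ∈ G.edgeFinset
      · have : {f : Sym2 V → ℝ | e ∉ G.edgeFinset → f e = 0} = Set.univ := by
          ext f; simp [he]
        rw [this]; exact isClosed_univ
      · have : {f : Sym2 V → ℝ | e ∉ G.edgeFinset → f e = 0}
            = {f : Sym2 V → ℝ | f e = 0} := by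
          ext f; simp [he]
        rw [this]; exact isClosed_eq (continuous_apply e) continuous_const
    · exact isClosed_iInter (fun v =>
        isClosed_le (continuous_finset_sum _ (fun e _ => continuous_apply e))
          continuous_const)
  have hPc : IsCompact P := by
    refine IsCompact.of_isClosed_subset
      (isCompact_univ_pi (fun _ : Sym2 V => isCompact_Icc (a := (0:ℝ)) (b := 1)))
      hclosed ?_
    intro f hf e _
    by_cases he : e ∈ G.edgeFinset
    · exact ⟨(hf.1 e he).1, (hf.1 e he).2⟩
    · rw [hf.2.1 e he]; exact ⟨le_refl 0, zero_le_one⟩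
  have hconts : Continuous fun f : Sym2 V → ℝ => ∑ e ∈ G.edgeFinset, f e :=
    continuous_finset_sum _ (fun e _ => continuous_apply e)
  have hSP : S = (fun f : Sym2 V → ℝ => ∑ e ∈ G.edgeFinset, f e) '' P := by
    ext x
    constructor
    · rintro ⟨f, hf, rfl⟩
      exact ⟨f, hf, rfl⟩
    · rintro ⟨f, hf, rfl⟩
      exact ⟨f, hf, rfl⟩
  have hScpt : IsCompact S := by
    rw [hSP]; exact hPc.image hconts
  have hmem : sSup S ∈ S := hScpt.sSup_mem ⟨0, hS0⟩
  obtain ⟨f₀, hf₀, hsup⟩ := hmem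
  have hmax : ∀ g, IsFracMatching G g →
      ∑ e ∈ G.edgeFinset, g e ≤ ∑ e ∈ G.edgeFinset, f₀ e := by
    intro g hg
    rw [← hsup]
    exact le_csSup hbdd ⟨g, hg, rfl⟩
  obtain ⟨z, hz⟩ := maximal_int G (mea G f₀) f₀ hf₀ hmax (le_refl _)
  have hz' : 2 * fracMatchNum G = (z : ℝ) := by
    rw [hfm, hsup]; exact hz
  have hge : (0 : ℝ) ≤ sSup S := le_csSup hbdd hS0
  have hznn : (0 : ℝ) ≤ (z : ℝ) := by
    rw [← hz', hfm]; linarith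
  refine ⟨z.toNat, ?_⟩
  rw [hz']
  have : ((z.toNat : ℤ) : ℝ) = (z : ℝ) := by
    rw [Int.toNat_of_nonneg (by exact_mod_cast hznn)]
  exact_mod_cast this.symm
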